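/- Along any solution a(t) of the reduced dynamical law ȧ_j = 2𝕁 Σ_{k≠j} d_k ∇F(a_j - a_k) - 4π q(a), the quantity ξ(a(t)) = (1/4) Σ_{j≠k} d_j d_k |a_j(t) - a_k(t)|² is constant in time, because ξ(a) = -(1/4)|q(a)|² + constant when Σ_j d_j = 0, and q(a(t)) is conserved. -/

import Mathlib

open Finset

lemma sum_sq_diff {n : ℕ} (d x : Fin n → ℝ) (hd : ∑ j, d j = 0) :
    ∑ j, ∑ k, d j * d k * (x j - x k) ^ 2 = -2 * (∑ j, d j * x j) ^ 2 := by
  have h : ∀ j : Fin n, ∑ k, d j * d k * (x j - x k) ^ 2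
      = (d j * x j ^ 2) * (∑ k, d k) + d j * (∑ k, d k * x k ^ 2)
        - 2 * ((d j * x j) * ∑ k, d k * x k) := by
    intro j
    simp only [Finset.mul_sum, Finset.sum_mul, ← Finset.sum_add_distrib,
      ← Finset.sum_sub_distrib]
    exact Finset.sum_congr rfl fun k _ => by ring
  simp_rw [h, hd, mul_zero, zero_add]
  rw [Finset.sum_sub_distrib, ← Finset.sum_mul, hd, zero_mul, zero_sub,
    ← Finset.mul_sum, ← Finset.sum_mul]
  ring

lemma gF_odd (F : ℝ × ℝ → ℝ) (hFeven : ∀ x : ℝ × ℝ, F (-x) = F x)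
    (hFdiff : ∀ x : ℝ × ℝ, x ≠ 0 → DifferentiableAt ℝ F x)
    (x : ℝ × ℝ) (hx : x ≠ 0) (v : ℝ × ℝ) :
    fderiv ℝ F (-x) v = - fderiv ℝ F x v := by
  have hL : HasFDerivAt F (fderiv ℝ F x) x := (hFdiff x hx).hasFDerivAt
  have hneg : HasFDerivAt (fun y : ℝ × ℝ => -y)
      (-(ContinuousLinearMap.id ℝ (ℝ × ℝ))) (-x) := by
    exact (hasFDerivAt_id (-x)).neg
  have hcomp : HasFDerivAt (fun y : ℝ × ℝ => F (-y))
      ((fderiv ℝ F x).comp (-(ContinuousLinearMap.id ℝ (ℝ × ℝ)))) (-x) := by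
    exact HasFDerivAt.comp (-x) (by simpa using hL) hneg
  have heq : (fun y : ℝ × ℝ => F (-y)) = F := funext hFeven
  rw [heq] at hcomp
  rw [hcomp.fderiv]
  simp


/-- Along any solution of
`ȧ_j = 2𝕁 Σ_{k≠j} d_k ∇F(a_j - a_k) - 4π q(a)` with `q(a) = 𝕁 Σ_m d_m a_m`,
`Σ_j d_j = 0` and `F` even `C¹`, the quantity
`ξ(a(t)) = (1/4) Σ_{j≠k} d_j d_k |a_j(t) - a_k(t)|²` is constant in time. -/
theorem stmt_10 (N : ℕ) (hN : 0 < N) (F : ℝ × ℝ → ℝ)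
    (hFeven : ∀ x : ℝ × ℝ, F (-x) = F x)
    (hFdiff : ∀ x : ℝ × ℝ, x ≠ 0 → DifferentiableAt ℝ F x)
    (Jmat : ℝ × ℝ → ℝ × ℝ) (hJ : Jmat = fun v => (v.2, -v.1))
    (gF : ℝ × ℝ → ℝ × ℝ)
    (hgF : gF = fun x => (fderiv ℝ F x ((1:ℝ), (0:ℝ)), fderiv ℝ F x ((0:ℝ), (1:ℝ))))
    (d : Fin (2 * N) → ℝ) (hd : ∀ j, d j = 1 ∨ d j = -1) (hdsum : ∑ j, d j = 0)
    (T : ℝ) (hT : 0 < T) (a : ℝ → Fin (2 * N) → ℝ × ℝ)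
    (hsep : ∀ t ∈ Set.Ico (0:ℝ) T, ∀ j k, j ≠ k → a t j ≠ a t k)
    (hODE : ∀ t ∈ Set.Ico (0:ℝ) T, ∀ j,
      HasDerivAt (fun s => a s j)
        ((2:ℝ) • Jmat (∑ k, if k ≠ j then d k • gF (a t j - a t k) else 0)
          - (4 * Real.pi) • Jmat (∑ m, d m • a t m)) t)
    (ξ : (Fin (2 * N) → ℝ × ℝ) → ℝ)
    (hξ : ξ = fun b => (1 / 4) * ∑ j, ∑ k,
      (if j ≠ k then d j * d k * ((b j - b k).1 ^ 2 + (b j - b k).2 ^ 2) else 0))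
    (t : ℝ) (ht : t ∈ Set.Ico (0:ℝ) T) :
    ξ (a t) = ξ (a 0) := by
  -- oddness of gF at nonzero points
  have hgFodd : ∀ x : ℝ × ℝ, x ≠ 0 → gF (-x) = -gF x := by
    intro x hx
    rw [hgF]
    exact Prod.ext (gF_odd F hFeven hFdiff x hx _) (gF_odd F hFeven hFdiff x hx _)
  -- J is linear (as a function)
  have hJsmul : ∀ (c : ℝ) (v : ℝ × ℝ), Jmat (c • v) = c • Jmat v := by
    intro c v; simp [hJ, Prod.ext_iff, mul_comm]
  have hJsum : ∀ (f : Fin (2 * N) → ℝ × ℝ), Jmat (∑ i, f i) = ∑ i, Jmat (f i) := by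
    intro f; simp [hJ, Prod.ext_iff, Prod.fst_sum, Prod.snd_sum, Finset.sum_neg_distrib]
  -- the linear momentum
  set p : ℝ → ℝ × ℝ := fun s => ∑ m, d m • a s m with hp
  -- p has zero derivative on the interval
  have hpder : ∀ s ∈ Set.Ico (0:ℝ) T, HasDerivAt p 0 s := by
    intro s hs
    have h1 : HasDerivAt p
        (∑ m, d m • ((2:ℝ) • Jmat (∑ k, if k ≠ m then d k • gF (a s m - a s k) else 0)
          - (4 * Real.pi) • Jmat (∑ m', d m' • a s m'))) s := by
      apply HasDerivAt.fun_sum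
      intro m _
      exact (hODE s hs m).const_smul (d m)
    convert h1 using 1
    -- the derivative vanishes
    have hzero : (∑ m, ∑ k, if k ≠ m then (d m * d k) • gF (a s m - a s k) else 0)
        = (0 : ℝ × ℝ) := by
      set S := ∑ m, ∑ k, if k ≠ m then (d m * d k) • gF (a s m - a s k) else 0 with hS
      have hswap : S = ∑ m, ∑ k, if m ≠ k then (d k * d m) • gF (a s k - a s m) else 0 := by
        rw [hS]; exact Finset.sum_comm
      have hneg : S = -S := by
        nth_rewrite 1 [hswap]
        rw [← Finset.sum_neg_distrib]
        refine Finset.sum_congr rfl fun m _ => ?_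
        rw [← Finset.sum_neg_distrib]
        refine Finset.sum_congr rfl fun k _ => ?_
        by_cases hmk : m ≠ k
        · rw [if_pos hmk, if_pos hmk.symm]
          have hx : a s m - a s k ≠ 0 := sub_ne_zero.mpr (hsep s hs m k hmk)
          have hab : a s k - a s m = -(a s m - a s k) := by abel
          rw [hab, hgFodd _ hx, mul_comm (d k) (d m), smul_neg]
        · push_neg at hmk; subst hmk; simp
      have : S + S = 0 := by nth_rewrite 1 [hneg]; simp
      have h2 : (2 : ℝ) • S = 0 := by rw [two_smul]; exact this
      simpa using h2
    symm
    have hsplit : (∑ m, d m • ((2:ℝ) • Jmat (∑ k, if k ≠ m then d k • gF (a s m - a s k) else 0)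
          - (4 * Real.pi) • Jmat (∑ m', d m' • a s m')))
        = (∑ m, d m • ((2:ℝ) • Jmat (∑ k, if k ≠ m then d k • gF (a s m - a s k) else 0)))
          - (∑ m, d m • ((4 * Real.pi) • Jmat (∑ m', d m' • a s m'))) := by
      rw [← Finset.sum_sub_distrib]
      exact Finset.sum_congr rfl fun m _ => smul_sub _ _ _
    rw [hsplit]
    have hB : (∑ m, d m • ((4 * Real.pi) • Jmat (∑ m', d m' • a s m'))) = 0 := by
      rw [← Finset.sum_smul, hdsum, zero_smul]
    have h2 : ∀ m : Fin (2 * N), (∑ k, if k ≠ m then (d m * d k) • gF (a s m - a s k) else 0)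
        = d m • (∑ k, if k ≠ m then d k • gF (a s m - a s k) else 0) := by
      intro m
      rw [Finset.smul_sum]
      exact Finset.sum_congr rfl fun k _ => by rw [smul_ite, smul_smul, smul_zero]
    have hA : (2:ℝ) • Jmat (∑ m, ∑ k, if k ≠ m then (d m * d k) • gF (a s m - a s k) else 0)
        = (∑ m, d m • ((2:ℝ) • Jmat (∑ k, if k ≠ m then d k • gF (a s m - a s k) else 0))) := by
      rw [hJsum, Finset.smul_sum]
      refine Finset.sum_congr rfl fun m _ => ?_
      rw [h2 m, hJsmul, smul_comm]
    rw [← hA, hB, hzero]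
    simp [hJ, Prod.ext_iff]
  -- p is constant on [0, T)
  have h0mem : (0:ℝ) ∈ Set.Ico (0:ℝ) T := ⟨le_refl 0, hT⟩
  have hpconst : p t = p 0 := by
    have hb := Convex.norm_image_sub_le_of_norm_hasDerivWithin_le
      (f := p) (f' := fun _ => (0 : ℝ × ℝ)) (C := 0)
      (fun s hs => (hpder s hs).hasDerivWithinAt)
      (fun s _ => by simp) (convex_Ico (0:ℝ) T) h0mem ht
    have : ‖p t - p 0‖ ≤ 0 := by simpa using hb
    have := le_antisymm this (norm_nonneg _)
    rwa [norm_sub_eq_zero_iff] at this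
  -- the algebraic identity: ξ b = -(1/2) * ((∑ d • b).1² + (∑ d • b).2²)
  have hxi : ∀ b : Fin (2 * N) → ℝ × ℝ,
      ξ b = -(1/2) * (((∑ m, d m • b m).1) ^ 2 + ((∑ m, d m • b m).2) ^ 2) := by
    intro b
    rw [hξ]
    have hdrop : ∀ j : Fin (2 * N), (∑ k, if j ≠ k then
          d j * d k * ((b j - b k).1 ^ 2 + (b j - b k).2 ^ 2) else 0)
        = ∑ k, (d j * d k * (((b j).1 - (b k).1) ^ 2) + d j * d k * (((b j).2 - (b k).2) ^ 2)) := by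
      intro j
      refine Finset.sum_congr rfl fun k _ => ?_
      by_cases hjk : j ≠ k
      · rw [if_pos hjk]
        simp only [Prod.fst_sub, Prod.snd_sub]
        ring
      · push_neg at hjk; subst hjk; simp
    simp only [hdrop, Finset.sum_add_distrib]
    rw [sum_sq_diff d (fun m => (b m).1) hdsum, sum_sq_diff d (fun m => (b m).2) hdsum,
      Prod.fst_sum, Prod.snd_sum]
    simp only [Prod.smul_fst, Prod.smul_snd, smul_eq_mul]
    ring
  rw [hxi (a t), hxi (a 0)]
  have : (∑ m, d m • a t m) = ∑ m, d m • a 0 m := hpconst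
  rw [this]
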